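/- Let n ≥ 4 and τ with 1 < τ < n-2. Suppose G: ℝ^{n-1} × ℝ^{n-1} → ℝ satisfies C₁|x-y|^{3-n} ≤ G(x,y) ≤ C₂|x-y|^{3-n} for all x ≠ y, and f: ℝ^{n-1} → ℝ satisfies |f(y)| ≤ C(1+|y|)^{-τ-1}. Define u(x) = -∫_{ℝ^{n-1}} G(x,y) f(y) dy. Then there exists C' depending only on n, τ, C, C₂ such that |u(x)| ≤ C' |x|^{1-τ} for all |x| ≥ 2. -/

import Mathlib

open MeasureTheory Metric Set ENNReal

section helpers
variable {E : Type*} [NormedAddCommGroup E] [NormedSpace ℝ E] [MeasurableSpace E]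
  [BorelSpace E] [FiniteDimensional ℝ E] (μ : Measure E) [μ.IsAddHaarMeasure]

lemma annulus_bound [Nontrivial E] (c : E) {t s e : ℝ} (ht : 0 < t) (hs : 0 ≤ s) (he : e ≤ 0) :
    ∫⁻ y in ball c s \ ball c t, ENNReal.ofReal (‖y - c‖ ^ e) ∂μ ≤
      ENNReal.ofReal (t ^ e * s ^ Module.finrank ℝ E) * μ (ball 0 1) := by
  calc ∫⁻ y in ball c s \ ball c t, ENNReal.ofReal (‖y - c‖ ^ e) ∂μ
      ≤ ∫⁻ _ in ball c s \ ball c t, ENNReal.ofReal (t ^ e) ∂μ := by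
        refine setLIntegral_mono' (measurableSet_ball.diff measurableSet_ball) fun y hy => ?_
        refine ENNReal.ofReal_le_ofReal (Real.rpow_le_rpow_of_nonpos ht ?_ he)
        have := hy.2
        simp only [mem_ball, dist_eq_norm, not_lt] at this
        exact this
    _ = ENNReal.ofReal (t ^ e) * μ (ball c s \ ball c t) := setLIntegral_const _ _
    _ ≤ ENNReal.ofReal (t ^ e) * μ (ball c s) := by
        exact mul_le_mul_right (measure_mono diff_subset) _
    _ = ENNReal.ofReal (t ^ e * s ^ Module.finrank ℝ E) * μ (ball 0 1) := by
        rw [Measure.addHaar_ball μ c hs, ← mul_assoc,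
          ENNReal.ofReal_mul (Real.rpow_nonneg ht.le _)]

lemma ball_rpow_bound [Nontrivial E] {a : ℝ} (ha0 : 0 ≤ a)
    (haD : a < Module.finrank ℝ E) :
    ∃ K : ℝ≥0∞, K ≠ ∞ ∧ ∀ (c : E) (R : ℝ), 0 < R →
      ∫⁻ y in ball c R, ENNReal.ofReal (‖y - c‖ ^ (-a)) ∂μ ≤
        K * ENNReal.ofReal (R ^ ((Module.finrank ℝ E : ℝ) - a)) := by
  set D : ℝ := (Module.finrank ℝ E : ℝ) with hD
  set q : ℝ≥0∞ := ENNReal.ofReal (2 ^ (a - D)) with hq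
  have hq1 : q < 1 := by
    rw [hq, ← ENNReal.ofReal_one]
    exact ENNReal.ofReal_lt_ofReal_iff_of_nonneg (by positivity) |>.2
      (Real.rpow_lt_one_of_one_lt_of_neg one_lt_two (by linarith))
  refine ⟨ENNReal.ofReal (2 ^ a) * μ (ball 0 1) * (1 - q)⁻¹, ?_, ?_⟩
  · exact ENNReal.mul_ne_top (ENNReal.mul_ne_top ENNReal.ofReal_ne_top
      measure_ball_lt_top.ne) (ENNReal.inv_ne_top.2 (tsub_pos_of_lt hq1).ne')
  intro c R hR
  have cover : ball c R \ {c} ⊆ ⋃ j : ℕ, (ball c (R / 2 ^ j) \ ball c (R / 2 ^ (j+1))) := by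
    rintro y ⟨hyR, hyc⟩
    have ht : 0 < dist y c := dist_pos.2 (by simpa using hyc)
    have hex : ∃ m : ℕ, R ≤ dist y c * 2 ^ (m+1) := by
      obtain ⟨m, hm⟩ := pow_unbounded_of_one_lt (R / dist y c) (one_lt_two (α := ℝ))
      rw [div_lt_iff₀ ht] at hm
      refine ⟨m, ?_⟩
      rw [pow_succ]
      nlinarith [pow_pos (zero_lt_two (α := ℝ)) m, ht]
    refine mem_iUnion.2 ⟨Nat.find hex, ?_, ?_⟩
    · rcases Nat.eq_zero_or_pos (Nat.find hex) with h0 | hpos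
      · rw [h0]; simpa using hyR
      · obtain ⟨k, hk⟩ := Nat.exists_eq_succ_of_ne_zero hpos.ne'
        have hmin := Nat.find_min hex (hk ▸ k.lt_succ_self)
        push_neg at hmin
        rw [hk, mem_ball, lt_div_iff₀ (pow_pos two_pos _)]
        simpa [Nat.succ_eq_add_one] using hmin
    · simp only [mem_ball, not_lt]
      rw [div_le_iff₀ (pow_pos two_pos _)]
      exact Nat.find_spec hex
  have key : ∀ j : ℕ, (R / 2 ^ (j+1) : ℝ) ^ (-a) * (R / 2 ^ j) ^ (Module.finrank ℝ E)
      = (2 ^ a * R ^ (D - a)) * (2 ^ (a - D)) ^ j := by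
    intro j
    have h2j : (0:ℝ) < 2 ^ j := pow_pos two_pos j
    have h2j1 : (0:ℝ) < 2 ^ (j+1) := pow_pos two_pos _
    have hda : (0:ℝ) < 2 ^ (a - D) := by positivity
    have h2a : (0:ℝ) < 2 ^ a := by positivity
    apply Real.log_injOn_pos (by rw [mem_Ioi]; positivity) (by rw [mem_Ioi]; positivity)
    rw [Real.log_mul (by positivity) (by positivity),
      Real.log_mul (by positivity) (by positivity),
      Real.log_rpow (by positivity), Real.log_pow, Real.log_pow,
      Real.log_div hR.ne' h2j.ne', Real.log_div hR.ne' h2j1.ne',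
      Real.log_pow, Real.log_pow,
      Real.log_mul h2a.ne' (Real.rpow_pos_of_pos hR _).ne',
      Real.log_rpow two_pos, Real.log_rpow two_pos, Real.log_rpow hR]
    push_cast
    ring
  calc ∫⁻ y in ball c R, ENNReal.ofReal (‖y - c‖ ^ (-a)) ∂μ
      = ∫⁻ y in ball c R \ {c}, ENNReal.ofReal (‖y - c‖ ^ (-a)) ∂μ :=
        (setLIntegral_congr (diff_null_ae_eq_self (measure_singleton c))).symm
    _ ≤ ∫⁻ y in ⋃ j : ℕ, (ball c (R / 2 ^ j) \ ball c (R / 2 ^ (j+1))),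
          ENNReal.ofReal (‖y - c‖ ^ (-a)) ∂μ := lintegral_mono_set cover
    _ ≤ ∑' j : ℕ, ∫⁻ y in ball c (R / 2 ^ j) \ ball c (R / 2 ^ (j+1)),
          ENNReal.ofReal (‖y - c‖ ^ (-a)) ∂μ := lintegral_iUnion_le _ _
    _ ≤ ∑' j : ℕ, ENNReal.ofReal ((R / 2 ^ (j+1)) ^ (-a)
          * (R / 2 ^ j) ^ (Module.finrank ℝ E)) * μ (ball 0 1) := by
        refine ENNReal.tsum_le_tsum fun j => ?_
        exact annulus_bound μ c (by positivity) (by positivity) (by linarith)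
    _ = ∑' j : ℕ, (ENNReal.ofReal (2 ^ a * R ^ (D - a)) * μ (ball 0 1)) * q ^ j := by
        refine tsum_congr fun j => ?_
        rw [key j, ENNReal.ofReal_mul (by positivity), hq,
          ← ENNReal.ofReal_pow (by positivity)]
        ring
    _ = (ENNReal.ofReal (2 ^ a * R ^ (D - a)) * μ (ball 0 1)) * (1 - q)⁻¹ := by
        rw [ENNReal.tsum_mul_left, ENNReal.tsum_geometric]
    _ = ENNReal.ofReal (2 ^ a) * μ (ball 0 1) * (1 - q)⁻¹
          * ENNReal.ofReal (R ^ (D - a)) := by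
        rw [ENNReal.ofReal_mul (by positivity)]
        ring

lemma compl_rpow_bound [Nontrivial E] {b : ℝ}
    (hbD : (Module.finrank ℝ E : ℝ) < b) :
    ∃ K : ℝ≥0∞, K ≠ ∞ ∧ ∀ (c : E) (R : ℝ), 0 < R →
      ∫⁻ y in (ball c R)ᶜ, ENNReal.ofReal (‖y - c‖ ^ (-b)) ∂μ ≤
        K * ENNReal.ofReal (R ^ ((Module.finrank ℝ E : ℝ) - b)) := by
  set D : ℝ := (Module.finrank ℝ E : ℝ) with hD
  set q : ℝ≥0∞ := ENNReal.ofReal (2 ^ (D - b)) with hq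
  have hq1 : q < 1 := by
    rw [hq, ← ENNReal.ofReal_one]
    exact ENNReal.ofReal_lt_ofReal_iff_of_nonneg (by positivity) |>.2
      (Real.rpow_lt_one_of_one_lt_of_neg one_lt_two (by linarith))
  refine ⟨ENNReal.ofReal (2 ^ D) * μ (ball 0 1) * (1 - q)⁻¹, ?_, ?_⟩
  · exact ENNReal.mul_ne_top (ENNReal.mul_ne_top ENNReal.ofReal_ne_top
      measure_ball_lt_top.ne) (ENNReal.inv_ne_top.2 (tsub_pos_of_lt hq1).ne')
  intro c R hR
  have cover : (ball c R)ᶜ ⊆ ⋃ j : ℕ, (ball c (R * 2 ^ (j+1)) \ ball c (R * 2 ^ j)) := by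
    intro y hy
    have hy' : R ≤ dist y c := by simpa [mem_ball, not_lt] using hy
    have hex : ∃ m : ℕ, dist y c < R * 2 ^ (m+1) := by
      obtain ⟨m, hm⟩ := pow_unbounded_of_one_lt (dist y c / R) (one_lt_two (α := ℝ))
      rw [div_lt_iff₀ hR] at hm
      refine ⟨m, ?_⟩
      rw [pow_succ]
      nlinarith [pow_pos (zero_lt_two (α := ℝ)) m, hR]
    refine mem_iUnion.2 ⟨Nat.find hex, ?_, ?_⟩
    · rw [mem_ball]; exact Nat.find_spec hex
    · simp only [mem_ball, not_lt]
      rcases Nat.eq_zero_or_pos (Nat.find hex) with h0 | hpos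
      · rw [h0]; simpa using hy'
      · obtain ⟨k, hk⟩ := Nat.exists_eq_succ_of_ne_zero hpos.ne'
        have hmin := Nat.find_min hex (hk ▸ k.lt_succ_self)
        push_neg at hmin
        rw [hk]
        simpa [Nat.succ_eq_add_one] using hmin
  have key : ∀ j : ℕ, (R * 2 ^ j : ℝ) ^ (-b) * (R * 2 ^ (j+1)) ^ (Module.finrank ℝ E)
      = (2 ^ D * R ^ (D - b)) * (2 ^ (D - b)) ^ j := by
    intro j
    have h2j : (0:ℝ) < 2 ^ j := pow_pos two_pos j
    have h2j1 : (0:ℝ) < 2 ^ (j+1) := pow_pos two_pos _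
    have hdb : (0:ℝ) < 2 ^ (D - b) := by positivity
    have h2D : (0:ℝ) < 2 ^ D := by positivity
    apply Real.log_injOn_pos (by rw [mem_Ioi]; positivity) (by rw [mem_Ioi]; positivity)
    rw [Real.log_mul (by positivity) (by positivity),
      Real.log_mul (by positivity) (by positivity),
      Real.log_rpow (by positivity), Real.log_pow, Real.log_pow,
      Real.log_mul hR.ne' h2j.ne', Real.log_mul hR.ne' h2j1.ne',
      Real.log_pow, Real.log_pow,
      Real.log_mul h2D.ne' (Real.rpow_pos_of_pos hR _).ne',
      Real.log_rpow two_pos, Real.log_rpow two_pos, Real.log_rpow hR]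
    push_cast
    ring
  calc ∫⁻ y in (ball c R)ᶜ, ENNReal.ofReal (‖y - c‖ ^ (-b)) ∂μ
      ≤ ∫⁻ y in ⋃ j : ℕ, (ball c (R * 2 ^ (j+1)) \ ball c (R * 2 ^ j)),
          ENNReal.ofReal (‖y - c‖ ^ (-b)) ∂μ := lintegral_mono_set cover
    _ ≤ ∑' j : ℕ, ∫⁻ y in ball c (R * 2 ^ (j+1)) \ ball c (R * 2 ^ j),
          ENNReal.ofReal (‖y - c‖ ^ (-b)) ∂μ := lintegral_iUnion_le _ _
    _ ≤ ∑' j : ℕ, ENNReal.ofReal ((R * 2 ^ j) ^ (-b)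
          * (R * 2 ^ (j+1)) ^ (Module.finrank ℝ E)) * μ (ball 0 1) := by
        refine ENNReal.tsum_le_tsum fun j => ?_
        exact annulus_bound μ c (by positivity) (by positivity) (by linarith)
    _ = ∑' j : ℕ, (ENNReal.ofReal (2 ^ D * R ^ (D - b)) * μ (ball 0 1)) * q ^ j := by
        refine tsum_congr fun j => ?_
        rw [key j, ENNReal.ofReal_mul (by positivity), hq,
          ← ENNReal.ofReal_pow (by positivity)]
        ring
    _ = (ENNReal.ofReal (2 ^ D * R ^ (D - b)) * μ (ball 0 1)) * (1 - q)⁻¹ := by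
        rw [ENNReal.tsum_mul_left, ENNReal.tsum_geometric]
    _ = ENNReal.ofReal (2 ^ D) * μ (ball 0 1) * (1 - q)⁻¹
          * ENNReal.ofReal (R ^ (D - b)) := by
        rw [ENNReal.ofReal_mul (by positivity)]
        ring

end helpers
open MeasureTheory Metric Set ENNReal

set_option maxHeartbeats 1600000 in
/-- Green-function decay estimate (from the proof of Lemma 3.11): if
`C₁|x-y|^{3-n} ≤ G(x,y) ≤ C₂|x-y|^{3-n}` and `|f(y)| ≤ C(1+|y|)^{-τ-1}` with
`1 < τ < n-2`, then `u(x) = -∫ G(x,y) f(y) dy` satisfies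
`|u(x)| ≤ C'|x|^{1-τ}` for `|x| ≥ 2`, with `C'` depending only on
`n, τ, C, C₂`. -/
theorem stmt4 (n : ℕ) (hn : 4 ≤ n) (τ : ℝ) (hτ1 : 1 < τ) (hτ2 : τ < (n : ℝ) - 2)
    (C C₁ C₂ : ℝ) (hC : 0 < C) (hC₁ : 0 < C₁) (hC₂ : 0 < C₂) :
    ∃ C' : ℝ, 0 < C' ∧
      ∀ (G : EuclideanSpace ℝ (Fin (n - 1)) → EuclideanSpace ℝ (Fin (n - 1)) → ℝ)
        (f : EuclideanSpace ℝ (Fin (n - 1)) → ℝ),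
        Measurable f →
        (∀ x, Measurable (G x)) →
        (∀ x y, x ≠ y → C₁ * ‖x - y‖ ^ ((3 : ℝ) - n) ≤ G x y ∧
          G x y ≤ C₂ * ‖x - y‖ ^ ((3 : ℝ) - n)) →
        (∀ y, |f y| ≤ C * (1 + ‖y‖) ^ (-τ - 1)) →
        ∀ x : EuclideanSpace ℝ (Fin (n - 1)), 2 ≤ ‖x‖ →
          |-∫ y, G x y * f y| ≤ C' * ‖x‖ ^ (1 - τ) := by
  set E := EuclideanSpace ℝ (Fin (n - 1)) with hE
  have hn4 : (4:ℝ) ≤ (n:ℝ) := by exact_mod_cast hn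
  have hfr : Module.finrank ℝ E = n - 1 := by
    exact finrank_euclideanSpace_fin
  have hD' : ((Module.finrank ℝ E : ℕ) : ℝ) = (n:ℝ) - 1 := by
    rw [hfr, Nat.cast_sub (by omega)]; norm_num
  haveI : Nontrivial E := Module.nontrivial_of_finrank_pos (R := ℝ) (by rw [hfr]; omega)
  obtain ⟨K₁, hK₁, hB₁⟩ := ball_rpow_bound (volume : Measure E) (a := τ + 1)
    (by linarith) (by rw [hD']; linarith)
  obtain ⟨K₂, hK₂, hB₂⟩ := ball_rpow_bound (volume : Measure E) (a := (n:ℝ) - 3)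
    (by linarith) (by rw [hD']; linarith)
  obtain ⟨K₃, hK₃, hB₃⟩ := compl_rpow_bound (volume : Measure E) (b := (n:ℝ) - 2 + τ)
    (by rw [hD']; linarith)
  set M : ℝ := C₂ * C with hM
  have hM0 : 0 < M := mul_pos hC₂ hC
  set c₁ : ℝ := M * K₁.toReal * (2 ^ ((n:ℝ) - 3) * 4 ^ (τ + 2 - (n:ℝ))) with hc₁
  set c₂ : ℝ := M * K₂.toReal * (9 * 4 ^ τ) with hc₂
  set c₃ : ℝ := M * K₃.toReal * (2 ^ ((n:ℝ) - 3) * 4 ^ (τ - 1)) with hc₃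
  have hc₁0 : 0 ≤ c₁ := by positivity
  have hc₂0 : 0 ≤ c₂ := by positivity
  have hc₃0 : 0 ≤ c₃ := by positivity
  refine ⟨c₁ + c₂ + c₃ + 1, by positivity, ?_⟩
  intro G f hf hGm hGb hfb x hx
  have hX : (0:ℝ) < ‖x‖ := by linarith
  set g : E → ℝ≥0∞ := fun y =>
    ENNReal.ofReal (M * (‖x - y‖ ^ ((3:ℝ) - (n:ℝ)) * (1 + ‖y‖) ^ (-τ - 1))) with hg
  -- Step 1 : reduce to lintegral
  rw [abs_neg, ← Real.norm_eq_abs]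
  refine le_trans (norm_integral_le_lintegral_norm _) ?_
  refine ENNReal.toReal_le_of_le_ofReal (by positivity) ?_
  -- Step 2 : pointwise bound
  have hptw : ∫⁻ y, ENNReal.ofReal ‖G x y * f y‖ ≤ ∫⁻ y, g y := by
    refine lintegral_mono_ae ?_
    filter_upwards [measure_eq_zero_iff_ae_notMem.1 (measure_singleton (μ := (volume : Measure E)) x)]
      with y hy
    have hxy : x ≠ y := fun h => hy (by simp [h])
    have hpos : 0 < ‖x - y‖ := by
      rw [norm_pos_iff, sub_ne_zero]; exact hxy
    obtain ⟨hG1, hG2⟩ := hGb x y hxy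
    have habs : |G x y| ≤ C₂ * ‖x - y‖ ^ ((3:ℝ) - (n:ℝ)) := by
      rw [abs_of_pos (lt_of_lt_of_le (by positivity) hG1)]; exact hG2
    refine ENNReal.ofReal_le_ofReal ?_
    rw [Real.norm_eq_abs, abs_mul]
    calc |G x y| * |f y| ≤ (C₂ * ‖x - y‖ ^ ((3:ℝ) - (n:ℝ))) * (C * (1 + ‖y‖) ^ (-τ - 1)) := by
          exact mul_le_mul habs (hfb y) (abs_nonneg _) (by positivity)
      _ = M * (‖x - y‖ ^ ((3:ℝ) - (n:ℝ)) * (1 + ‖y‖) ^ (-τ - 1)) := by ring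
  refine le_trans hptw ?_
  -- Step 3 : split into three regions
  set A : Set E := ball (0:E) (‖x‖/4) with hA
  set Bb : Set E := ball x (3*‖x‖/2) with hBb
  have hsplit : ∫⁻ y, g y ≤ (∫⁻ y in A, g y) + (∫⁻ y in Bb \ A, g y)
      + (∫⁻ y in (A ∪ Bb)ᶜ, g y) := by
    calc ∫⁻ y, g y = ∫⁻ y in univ, g y := (setLIntegral_univ _).symm
      _ ≤ ∫⁻ y in A ∪ ((Bb \ A) ∪ (A ∪ Bb)ᶜ), g y := by
          refine lintegral_mono_set fun y _ => ?_
          by_cases h1 : y ∈ A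
          · exact Or.inl h1
          · by_cases h2 : y ∈ Bb
            · exact Or.inr (Or.inl ⟨h2, h1⟩)
            · exact Or.inr (Or.inr (fun h => h.elim h1 h2))
      _ ≤ (∫⁻ y in A, g y) + ((∫⁻ y in Bb \ A, g y) + (∫⁻ y in (A ∪ Bb)ᶜ, g y)) :=
          le_trans (lintegral_union_le _ _ _) (add_le_add le_rfl (lintegral_union_le _ _ _))
      _ = _ := by ring
  refine le_trans hsplit ?_

  have hlog4 : Real.log 4 = 2 * Real.log 2 := by
    rw [show (4:ℝ) = 2^(2:ℕ) by norm_num, Real.log_pow]; push_cast; ring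
  have hlog9 : Real.log 9 = 2 * Real.log 3 := by
    rw [show (9:ℝ) = 3^(2:ℕ) by norm_num, Real.log_pow]; push_cast; ring
  have h4 : (0:ℝ) < 4 := by norm_num
  have hRA : ∫⁻ y in A, g y ≤ ENNReal.ofReal (c₁ * ‖x‖ ^ (1 - τ)) := by
    have he₁ : ((Module.finrank ℝ E : ℕ) : ℝ) - (τ+1) = (n:ℝ) - 2 - τ := by
      rw [hD']; ring
    have step1 : ∫⁻ y in A, g y ≤ ∫⁻ y in A,
        ENNReal.ofReal (M * (‖x‖/2) ^ ((3:ℝ) - (n:ℝ))) * ENNReal.ofReal (‖y - 0‖ ^ (-(τ+1))) := by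
      refine lintegral_mono_ae ?_
      filter_upwards [ae_restrict_mem measurableSet_ball,
        ae_restrict_of_ae (measure_eq_zero_iff_ae_notMem.1
          (measure_singleton (μ := (volume : Measure E)) (0:E)))] with y hyA hy0
      have hy0' : y ≠ 0 := fun h => hy0 (by simp [h])
      have hyn : ‖y‖ < ‖x‖/4 := by
        simpa [hA, mem_ball, dist_eq_norm] using hyA
      have hyp : 0 < ‖y‖ := norm_pos_iff.2 hy0'
      have h1 : ‖x‖/2 ≤ ‖x - y‖ := by
        have := norm_sub_norm_le x y
        linarith
      rw [← ENNReal.ofReal_mul (by positivity)]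
      refine ENNReal.ofReal_le_ofReal ?_
      have b1 : ‖x - y‖ ^ ((3:ℝ) - (n:ℝ)) ≤ (‖x‖/2) ^ ((3:ℝ) - (n:ℝ)) :=
        Real.rpow_le_rpow_of_nonpos (by positivity) h1 (by linarith)
      have b2 : (1 + ‖y‖) ^ (-τ - 1) ≤ ‖y - 0‖ ^ (-(τ+1)) := by
        rw [sub_zero, show -τ - 1 = -(τ+1) by ring]
        exact Real.rpow_le_rpow_of_nonpos hyp (by linarith) (by linarith)
      calc M * (‖x - y‖ ^ ((3:ℝ) - (n:ℝ)) * (1 + ‖y‖) ^ (-τ - 1))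
          ≤ M * ((‖x‖/2) ^ ((3:ℝ) - (n:ℝ)) * (‖y - 0‖ ^ (-(τ+1)))) := by
            refine mul_le_mul_of_nonneg_left ?_ hM0.le
            exact mul_le_mul b1 b2 (by positivity) (by positivity)
        _ = M * (‖x‖/2) ^ ((3:ℝ) - (n:ℝ)) * ‖y - 0‖ ^ (-(τ+1)) := by ring
    refine le_trans step1 ?_
    rw [lintegral_const_mul' _ _ ENNReal.ofReal_ne_top]
    have hB₁' := hB₁ 0 (‖x‖/4) (by positivity)
    rw [he₁] at hB₁'
    refine le_trans (mul_le_mul_right hB₁' _) ?_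
    rw [← ENNReal.ofReal_toReal hK₁, ← ENNReal.ofReal_mul (by positivity),
      ← ENNReal.ofReal_mul (by positivity)]
    refine ENNReal.ofReal_le_ofReal ?_
    have I₁ : (‖x‖/2) ^ ((3:ℝ) - (n:ℝ)) * (‖x‖/4) ^ ((n:ℝ) - 2 - τ)
        = 2 ^ ((n:ℝ) - 3) * 4 ^ (τ + 2 - (n:ℝ)) * ‖x‖ ^ (1 - τ) := by
      apply Real.log_injOn_pos (mem_Ioi.2 (by positivity)) (mem_Ioi.2 (by positivity))
      rw [Real.log_mul (ne_of_gt (Real.rpow_pos_of_pos (by positivity) _))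
          (ne_of_gt (Real.rpow_pos_of_pos (by positivity) _)),
        Real.log_rpow (by positivity), Real.log_rpow (by positivity),
        Real.log_div hX.ne' two_ne_zero, Real.log_div hX.ne' (by norm_num : (4:ℝ) ≠ 0),
        Real.log_mul (by positivity) (ne_of_gt (Real.rpow_pos_of_pos hX _)),
        Real.log_mul (ne_of_gt (Real.rpow_pos_of_pos two_pos _))
          (ne_of_gt (Real.rpow_pos_of_pos h4 _)),
        Real.log_rpow two_pos, Real.log_rpow h4, Real.log_rpow hX, hlog4]
      ring
    rw [hc₁]
    linear_combination (M * K₁.toReal) * I₁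
  have hRB : ∫⁻ y in Bb \ A, g y ≤ ENNReal.ofReal (c₂ * ‖x‖ ^ (1 - τ)) := by
    have he₂ : ((Module.finrank ℝ E : ℕ) : ℝ) - ((n:ℝ) - 3) = (2:ℝ) := by
      rw [hD']; ring
    have step1 : ∫⁻ y in Bb \ A, g y ≤ ∫⁻ y in Bb \ A,
        ENNReal.ofReal (M * (‖x‖/4) ^ (-τ - 1))
          * ENNReal.ofReal (‖y - x‖ ^ (-((n:ℝ) - 3))) := by
      refine setLIntegral_mono' (measurableSet_ball.diff measurableSet_ball) fun y hy => ?_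
      have hyn : ‖x‖/4 ≤ ‖y‖ := by
        have := hy.2
        simp only [hA, mem_ball, dist_eq_norm, dist_zero_right, sub_zero, not_lt] at this
        exact this
      rw [← ENNReal.ofReal_mul (by positivity)]
      refine ENNReal.ofReal_le_ofReal ?_
      have b1 : ‖x - y‖ ^ ((3:ℝ) - (n:ℝ)) = ‖y - x‖ ^ (-((n:ℝ) - 3)) := by
        rw [norm_sub_rev, show (3:ℝ) - (n:ℝ) = -((n:ℝ) - 3) by ring]
      have b2 : (1 + ‖y‖) ^ (-τ - 1) ≤ (‖x‖/4) ^ (-τ - 1) :=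
        Real.rpow_le_rpow_of_nonpos (by positivity) (by linarith) (by linarith)
      calc M * (‖x - y‖ ^ ((3:ℝ) - (n:ℝ)) * (1 + ‖y‖) ^ (-τ - 1))
          ≤ M * (‖y - x‖ ^ (-((n:ℝ) - 3)) * (‖x‖/4) ^ (-τ - 1)) := by
            refine mul_le_mul_of_nonneg_left ?_ hM0.le
            rw [b1]
            exact mul_le_mul_of_nonneg_left b2 (by positivity)
        _ = M * (‖x‖/4) ^ (-τ - 1) * ‖y - x‖ ^ (-((n:ℝ) - 3)) := by ring
    refine le_trans step1 ?_
    rw [lintegral_const_mul' _ _ ENNReal.ofReal_ne_top]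
    have hB₂' := hB₂ x (3*‖x‖/2) (by positivity)
    rw [he₂] at hB₂'
    refine le_trans (mul_le_mul_right (le_trans (lintegral_mono_set diff_subset) hB₂') _) ?_
    rw [← ENNReal.ofReal_toReal hK₂, ← ENNReal.ofReal_mul (by positivity),
      ← ENNReal.ofReal_mul (by positivity)]
    refine ENNReal.ofReal_le_ofReal ?_
    have I₂ : (‖x‖/4) ^ (-τ - 1) * (3*‖x‖/2) ^ ((2:ℝ))
        = 9 * 4 ^ τ * ‖x‖ ^ (1 - τ) := by
      apply Real.log_injOn_pos (mem_Ioi.2 (by positivity)) (mem_Ioi.2 (by positivity))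
      rw [Real.log_mul (ne_of_gt (Real.rpow_pos_of_pos (by positivity) _))
          (ne_of_gt (Real.rpow_pos_of_pos (by positivity) _)),
        Real.log_rpow (by positivity), Real.log_rpow (by positivity),
        Real.log_div hX.ne' (by norm_num : (4:ℝ) ≠ 0),
        Real.log_div (by positivity) two_ne_zero,
        Real.log_mul three_ne_zero hX.ne',
        Real.log_mul (by positivity) (ne_of_gt (Real.rpow_pos_of_pos hX _)),
        Real.log_mul (by norm_num : (9:ℝ) ≠ 0) (ne_of_gt (Real.rpow_pos_of_pos h4 _)),
        Real.log_rpow h4, Real.log_rpow hX, hlog4, hlog9]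
      ring
    rw [hc₂]
    linear_combination (M * K₂.toReal) * I₂
  have hRC : ∫⁻ y in (A ∪ Bb)ᶜ, g y ≤ ENNReal.ofReal (c₃ * ‖x‖ ^ (1 - τ)) := by
    have he₃ : ((Module.finrank ℝ E : ℕ) : ℝ) - ((n:ℝ) - 2 + τ) = 1 - τ := by
      rw [hD']; ring
    have step1 : ∫⁻ y in (A ∪ Bb)ᶜ, g y ≤ ∫⁻ y in (A ∪ Bb)ᶜ,
        ENNReal.ofReal (M * 2 ^ ((n:ℝ) - 3))
          * ENNReal.ofReal (‖y - 0‖ ^ (-((n:ℝ) - 2 + τ))) := by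
      refine setLIntegral_mono' (measurableSet_ball.union measurableSet_ball).compl
        fun y hy => ?_
      have hyA : y ∉ A := fun h => hy (Or.inl h)
      have hyB : y ∉ Bb := fun h => hy (Or.inr h)
      have hyn : ‖x‖/4 ≤ ‖y‖ := by
        simpa [hA, mem_ball, dist_eq_norm, not_lt] using hyA
      have hyx : 3*‖x‖/2 ≤ ‖y - x‖ := by
        have := dist_eq_norm y x
        simp [hBb, mem_ball, not_lt] at hyB
        linarith
      have hyp : 0 < ‖y‖ := by linarith
      have hcl : ‖y‖/2 ≤ ‖x - y‖ := by
        rw [norm_sub_rev]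
        by_cases hy6 : ‖y‖ ≤ 3*‖x‖
        · linarith
        · have := norm_sub_norm_le y x
          linarith
      rw [← ENNReal.ofReal_mul (by positivity)]
      refine ENNReal.ofReal_le_ofReal ?_
      have b1 : ‖x - y‖ ^ ((3:ℝ) - (n:ℝ)) ≤ (‖y‖/2) ^ ((3:ℝ) - (n:ℝ)) :=
        Real.rpow_le_rpow_of_nonpos (by positivity) hcl (by linarith)
      have b2 : (1 + ‖y‖) ^ (-τ - 1) ≤ ‖y‖ ^ (-τ - 1) :=
        Real.rpow_le_rpow_of_nonpos hyp (by linarith) (by linarith)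
      have J : (‖y‖/2) ^ ((3:ℝ) - (n:ℝ)) * ‖y‖ ^ (-τ - 1)
          = 2 ^ ((n:ℝ) - 3) * ‖y‖ ^ (-((n:ℝ) - 2 + τ)) := by
        apply Real.log_injOn_pos (mem_Ioi.2 (by positivity)) (mem_Ioi.2 (by positivity))
        rw [Real.log_mul (ne_of_gt (Real.rpow_pos_of_pos (by positivity) _))
            (ne_of_gt (Real.rpow_pos_of_pos hyp _)),
          Real.log_rpow (by positivity), Real.log_rpow hyp,
          Real.log_div hyp.ne' two_ne_zero,
          Real.log_mul (ne_of_gt (Real.rpow_pos_of_pos two_pos _))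
            (ne_of_gt (Real.rpow_pos_of_pos hyp _)),
          Real.log_rpow two_pos, Real.log_rpow hyp]
        ring
      calc M * (‖x - y‖ ^ ((3:ℝ) - (n:ℝ)) * (1 + ‖y‖) ^ (-τ - 1))
          ≤ M * ((‖y‖/2) ^ ((3:ℝ) - (n:ℝ)) * ‖y‖ ^ (-τ - 1)) := by
            refine mul_le_mul_of_nonneg_left ?_ hM0.le
            exact mul_le_mul b1 b2 (by positivity) (by positivity)
        _ = M * 2 ^ ((n:ℝ) - 3) * (‖y - 0‖ ^ (-((n:ℝ) - 2 + τ))) := by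
            rw [sub_zero, J]; ring
    refine le_trans step1 ?_
    rw [lintegral_const_mul' _ _ ENNReal.ofReal_ne_top]
    have hB₃' := hB₃ 0 (‖x‖/4) (by positivity)
    rw [he₃] at hB₃'
    have hsub : (A ∪ Bb)ᶜ ⊆ (ball (0:E) (‖x‖/4))ᶜ := by
      rw [hA]
      exact compl_subset_compl.2 subset_union_left
    refine le_trans (mul_le_mul_right (le_trans (lintegral_mono_set hsub) hB₃') _) ?_
    rw [← ENNReal.ofReal_toReal hK₃, ← ENNReal.ofReal_mul (by positivity),
      ← ENNReal.ofReal_mul (by positivity)]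
    refine ENNReal.ofReal_le_ofReal ?_
    have I₃ : (‖x‖/4) ^ (1 - τ) = 4 ^ (τ - 1) * ‖x‖ ^ (1 - τ) := by
      apply Real.log_injOn_pos (mem_Ioi.2 (by positivity)) (mem_Ioi.2 (by positivity))
      rw [Real.log_rpow (by positivity), Real.log_div hX.ne' (by norm_num : (4:ℝ) ≠ 0),
        Real.log_mul (ne_of_gt (Real.rpow_pos_of_pos h4 _))
          (ne_of_gt (Real.rpow_pos_of_pos hX _)),
        Real.log_rpow h4, Real.log_rpow hX]
      ring
    rw [hc₃]
    linear_combination (M * K₃.toReal * 2 ^ ((n:ℝ) - 3)) * I₃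
  calc (∫⁻ y in A, g y) + (∫⁻ y in Bb \ A, g y) + (∫⁻ y in (A ∪ Bb)ᶜ, g y)
      ≤ ENNReal.ofReal (c₁ * ‖x‖ ^ (1 - τ)) + ENNReal.ofReal (c₂ * ‖x‖ ^ (1 - τ))
        + ENNReal.ofReal (c₃ * ‖x‖ ^ (1 - τ)) := by
        exact add_le_add (add_le_add hRA hRB) hRC
    _ ≤ ENNReal.ofReal ((c₁ + c₂ + c₃ + 1) * ‖x‖ ^ (1 - τ)) := by
        rw [← ENNReal.ofReal_add (by positivity) (by positivity),
          ← ENNReal.ofReal_add (by positivity) (by positivity)]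
        refine ENNReal.ofReal_le_ofReal ?_
        have : (0:ℝ) ≤ ‖x‖ ^ (1 - τ) := by positivity
        nlinarith
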